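/- Suppose for fixed n,M,k there are nodes \alpha_0 < \cdots < \alpha_{k-1} in (-1,1) and positive weights \rho_0,\ldots,\rho_{k-1} such that f_0 = f(1)/M + \sum_{i=0}^{k-1}\rho_i f(\alpha_i) for every polynomial f of degree at most 2k-1. Then the weights satisfy M\rho_0 = -\frac{(1-\alpha_1^2)(1-\alpha_2^2)\cdots(1-\alpha_{k-1}^2)}{\alpha_0(\alpha_0^2-\alpha_1^2)\cdots(\alpha_0^2-\alpha_{k-1}^2)}, provided the odd moments vanish: \int t^{2j+1} d\mu_n = 0 for all j \ge 0 (the case q=2). -/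

import Mathlib

/-- Integral against the binary Krawtchouk orthogonality measure
`μ_n = 2^{-n} ∑_i C(n,i) δ_{-1+2i/n}`. -/
noncomputable def krawInteg2 (n : ℕ) (f : ℝ → ℝ) : ℝ :=
  (1 / (2 : ℝ) ^ n) *
    ∑ i ∈ Finset.range (n + 1), (n.choose i : ℝ) * f (-1 + 2 * (i : ℝ) / n)

open Polynomial in
lemma kraw_odd_zero (n : ℕ) (p : ℝ[X])
    (hodd : ∀ j : ℕ, krawInteg2 n (fun t => t ^ (2 * j + 1)) = 0)
    (hcoeff : ∀ j, Even j → p.coeff j = 0) :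
    krawInteg2 n (fun t => p.eval t) = 0 := by
  have key : ∀ t : ℝ, p.eval t = ∑ j ∈ Finset.range (p.natDegree + 1), p.coeff j * t ^ j :=
    fun t => p.eval_eq_sum_range t
  have lin : krawInteg2 n (fun t => p.eval t)
      = ∑ j ∈ Finset.range (p.natDegree + 1), p.coeff j *
        krawInteg2 n (fun t => t ^ j) := by
    simp only [krawInteg2, key]
    simp_rw [Finset.mul_sum]
    rw [Finset.sum_comm]
    congr 1; ext j
    exact Finset.sum_congr rfl fun i _ => by ring
  rw [lin]
  apply Finset.sum_eq_zero
  intro j _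
  rcases Nat.even_or_odd j with he | ho
  · rw [hcoeff j he, zero_mul]
  · obtain ⟨m, hm⟩ := ho
    rw [hm, hodd m, mul_zero]

open Polynomial

theorem stmt_13 (n k : ℕ) (hn : 1 ≤ n) (hk : 1 ≤ k) (M : ℝ) (hM : 0 < M)
    (α ρ : Fin k → ℝ) (hmono : StrictMono α) (hα : ∀ i, α i ∈ Set.Ioo (-1 : ℝ) 1)
    (hρ : ∀ i, 0 < ρ i)
    -- the quadrature formula, where `f_0 = ∫ f dμ_n`:
    (hquad : ∀ p : Polynomial ℝ, p.natDegree ≤ 2 * k - 1 →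
      krawInteg2 n (fun t => p.eval t) = p.eval 1 / M + ∑ i, ρ i * p.eval (α i))
    -- the odd moments of `μ_n` vanish (the case `q = 2`):
    (hodd : ∀ j : ℕ, krawInteg2 n (fun t => t ^ (2 * j + 1)) = 0)
    -- nondegeneracy of the denominators in the formula:
    (h0 : α ⟨0, hk⟩ ≠ 0)
    (hne : ∀ i : Fin k, i ≠ ⟨0, hk⟩ → (α ⟨0, hk⟩) ^ 2 ≠ (α i) ^ 2) :
    M * ρ ⟨0, hk⟩ =
      -(∏ i ∈ Finset.univ.erase ⟨0, hk⟩, (1 - (α i) ^ 2)) /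
        (α ⟨0, hk⟩ * ∏ i ∈ Finset.univ.erase ⟨0, hk⟩, ((α ⟨0, hk⟩) ^ 2 - (α i) ^ 2)) := by
  set i0 : Fin k := ⟨0, hk⟩
  set S := (Finset.univ : Finset (Fin k)).erase i0 with hS
  set q : ℝ[X] := ∏ i ∈ S, (X - C ((α i) ^ 2)) with hq
  set p : ℝ[X] := X * expand ℝ 2 q with hp
  have hqdeg : q.natDegree = k - 1 := by
    rw [hq, natDegree_prod]
    · simp only [natDegree_X_sub_C]
      rw [Finset.sum_const, smul_eq_mul, mul_one]
      rw [hS, Finset.card_erase_of_mem (Finset.mem_univ _), Finset.card_univ, Fintype.card_fin]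
    · intro i _
      exact X_sub_C_ne_zero _
  have hqne : q ≠ 0 := by
    rw [hq]
    exact Finset.prod_ne_zero_iff.mpr fun i _ => X_sub_C_ne_zero _
  have hpdeg : p.natDegree ≤ 2 * k - 1 := by
    rw [hp, natDegree_mul X_ne_zero, natDegree_X, natDegree_expand, hqdeg]
    · omega
    · intro h
      rw [expand_eq_zero (by norm_num)] at h
      exact hqne h
  have heval : ∀ t : ℝ, p.eval t = t * ∏ i ∈ S, (t ^ 2 - (α i) ^ 2) := by
    intro t
    simp [hp, hq, expand_eval, eval_prod]
  have hcoeff : ∀ j, Even j → p.coeff j = 0 := by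
    intro j hj
    rcases j with _ | m
    · simp [hp]
    · rw [hp, coeff_X_mul, coeff_expand (by norm_num)]
      rw [if_neg]
      intro h
      obtain ⟨s, hs⟩ := h
      obtain ⟨r, hr⟩ := hj
      omega
  have hzero := kraw_odd_zero n p hodd hcoeff
  have hmain := hquad p hpdeg
  rw [hzero] at hmain
  have hsum : ∑ i, ρ i * p.eval (α i) = ρ i0 * (α i0 * ∏ i ∈ S, ((α i0) ^ 2 - (α i) ^ 2)) := by
    rw [Finset.sum_eq_single i0]
    · rw [heval]
    · intro i _ hi
      have : p.eval (α i) = 0 := by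
        rw [heval]
        rw [Finset.prod_eq_zero (Finset.mem_erase.mpr ⟨hi, Finset.mem_univ _⟩) (by ring)]
        ring
      rw [this, mul_zero]
    · intro h; exact absurd (Finset.mem_univ _) h
  rw [hsum, heval 1] at hmain
  have hB : (∏ i ∈ S, ((α i0) ^ 2 - (α i) ^ 2)) ≠ 0 := by
    apply Finset.prod_ne_zero_iff.mpr
    intro i hi
    exact sub_ne_zero.mpr (hne i (Finset.mem_erase.mp hi).1)
  have hA : (∏ i ∈ S, ((1:ℝ) ^ 2 - (α i) ^ 2)) = ∏ i ∈ S, (1 - (α i) ^ 2) := by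
    apply Finset.prod_congr rfl; intro i _; ring
  rw [hA] at hmain
  rw [eq_div_iff (mul_ne_zero h0 hB)]
  field_simp at hmain
  linear_combination -hmain
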